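/- For every prime p, the function f : ℕ → ℕ defined by f(n) = binomial(2n, n) + (p^{2n} - 1)·binomial(2n, n+1) is a binomial multisum and satisfies ord_p(f(n)) = ord_p(C_n) for all n ∈ ℕ, where C_n is the n-th Catalan number and ord_p(m) = max{d : p^d divides m} is the p-adic valuation. -/

import Mathlib

/-- Modified binomial coefficient: `C(a,b) = a!/((a-b)!·b!)` if `0 ≤ b ≤ a`,
`C(-1,0) = 1`, and `0` otherwise. -/
def mbinom (a b : ℤ) : ℕ :=
  if 0 ≤ b ∧ b ≤ a then a.toNat.choose b.toNat
  else if a = -1 ∧ b = 0 then 1 else 0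

/-- The general term of a binomial multisum, indexed by `v ∈ ℤ^d`. -/
def multisumTerm {r d : ℕ} (A B : Fin r → Fin d → ℤ) (a' a'' b' b'' : Fin r → ℤ)
    (n : ℕ) (v : Fin d → ℤ) : ℕ :=
  ∏ i, mbinom ((∑ j, A i j * v j) + a' i * (n : ℤ) + a'' i)
              ((∑ j, B i j * v j) + b' i * (n : ℤ) + b'' i)

/-- `f : ℕ → ℕ` is a binomial multisum: for every `n` only finitely many `v ∈ ℤ^d`
contribute, and `f n` is the (finite) sum of the products of modified binomial
coefficients of integer-coefficient affine functions of `(v, n)`. -/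
def IsBinomialMultisum (f : ℕ → ℕ) : Prop :=
  ∃ (r d : ℕ) (A B : Fin r → Fin d → ℤ) (a' a'' b' b'' : Fin r → ℤ),
    (∀ n : ℕ, (Function.support (multisumTerm A B a' a'' b' b'' n)).Finite) ∧
    ∀ n : ℕ, f n = ∑ᶠ v : Fin d → ℤ, multisumTerm A B a' a'' b' b'' n v

namespace TCaux

/-! ### Basic facts about `mbinom` -/

lemma mbinom_natCast (a b : ℕ) : mbinom (a : ℤ) (b : ℤ) = a.choose b := by
  unfold mbinom
  rcases le_or_gt (b : ℤ) (a : ℤ) with h | h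
  · rw [if_pos ⟨Int.ofNat_nonneg b, h⟩, Int.toNat_natCast, Int.toNat_natCast]
  · rw [if_neg (by omega), if_neg (by omega)]
    exact (Nat.choose_eq_zero_of_lt (by exact_mod_cast h)).symm

lemma mbinom_ne_zero {a b : ℤ} (h : mbinom a b ≠ 0) :
    (0 ≤ b ∧ b ≤ a) ∨ (a = -1 ∧ b = 0) := by
  unfold mbinom at h
  split_ifs at h with h1 h2
  · exact Or.inl h1
  · exact Or.inr h2
  · exact absurd rfl h

lemma mbinom_eq_zero {a b : ℤ} (h : ¬((0 ≤ b ∧ b ≤ a) ∨ (a = -1 ∧ b = 0))) :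
    mbinom a b = 0 := by
  by_contra hne
  exact h (mbinom_ne_zero hne)

lemma mbinom_diag {a : ℤ} (ha : 0 ≤ a) : mbinom a a = 1 := by
  unfold mbinom
  rw [if_pos ⟨ha, le_refl a⟩, Nat.choose_self]

lemma mbinom_diag_neg {a : ℤ} (ha : a < 0) : mbinom a a = 0 :=
  mbinom_eq_zero (by omega)

lemma mbinom_neg_one_zero : mbinom (-1) 0 = 1 := by
  unfold mbinom
  rw [if_neg (by omega), if_pos ⟨rfl, rfl⟩]

lemma mbinom_neg_one {b : ℤ} (hb : b ≠ 0) : mbinom (-1) b = 0 :=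
  mbinom_eq_zero (by omega)

/-! ### Chains -/

/-- The product of binomials along a descending chain starting at `m`. -/
def chainFrom {k : ℕ} (m : ℤ) (u : Fin k → ℤ) : ℕ :=
  ∏ j : Fin k, mbinom ((Fin.cons m u : Fin (k + 1) → ℤ) j.castSucc) (u j)

lemma chainFrom_succ {k : ℕ} (m : ℤ) (u : Fin (k + 1) → ℤ) :
    chainFrom m u = mbinom m (u 0) * chainFrom (u 0) (Fin.tail u) := by
  unfold chainFrom
  rw [Fin.prod_univ_succ]
  congr 1
  · apply Finset.prod_congr rfl
    intro j _
    have h1 : (Fin.succ j).castSucc = (j.castSucc).succ := (Fin.succ_castSucc j).symm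
    rw [h1, Fin.cons_succ]
    have h2 : Fin.cons (u 0) (Fin.tail u) (j.castSucc) = u j.castSucc := by
      rw [Fin.cons_self_tail]
    rw [h2]
    rfl

/-- Sum over `Fin (k+1) → ℤ` boxes splits off the head coordinate. -/
lemma sum_piFinset_succ {k : ℕ} (s : Finset ℤ) (F : (Fin (k + 1) → ℤ) → ℕ) :
    ∑ v ∈ Fintype.piFinset (fun _ : Fin (k + 1) => s), F v
      = ∑ a ∈ s, ∑ w ∈ Fintype.piFinset (fun _ : Fin k => s), F (Fin.cons a w) := by
  have h := Finset.sum_bij'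
    (s := Fintype.piFinset (fun _ : Fin (k + 1) => s))
    (t := s ×ˢ Fintype.piFinset (fun _ : Fin k => s))
    (f := F) (g := fun q => F (Fin.cons q.1 q.2))
    (fun v _ => (v 0, Fin.tail v)) (fun q _ => Fin.cons q.1 q.2)
    (by
      intro v hv
      rw [Fintype.mem_piFinset] at hv
      rw [Finset.mem_product]
      exact ⟨hv 0, by rw [Fintype.mem_piFinset]; intro j; exact hv j.succ⟩)
    (by
      intro q hq
      rw [Finset.mem_product] at hq
      rw [Fintype.mem_piFinset]
      intro j
      refine Fin.cases ?_ ?_ j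
      · rw [Fin.cons_zero]; exact hq.1
      · intro i
        rw [Fin.cons_succ]
        have := hq.2
        rw [Fintype.mem_piFinset] at this
        exact this i)
    (by intro v _; dsimp only; exact Fin.cons_self_tail v)
    (by intro q _; simp [Fin.tail_cons])
    (by intro v _; dsimp only; rw [Fin.cons_self_tail])
  rw [h, Finset.sum_product]

lemma sum_Icc_to_range (M : ℕ) (g : ℤ → ℕ) :
    ∑ x ∈ Finset.Icc (0 : ℤ) (M : ℤ), g x = ∑ i ∈ Finset.range (M + 1), g (i : ℤ) := by
  refine Finset.sum_bij' (fun x _ => x.toNat) (fun i _ => (i : ℤ)) ?_ ?_ ?_ ?_ ?_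
  · intro x hx
    rw [Finset.mem_Icc] at hx
    rw [Finset.mem_range]
    omega
  · intro i hi
    rw [Finset.mem_range] at hi
    rw [Finset.mem_Icc]
    omega
  · intro x hx
    rw [Finset.mem_Icc] at hx
    omega
  · intro i _
    exact Int.toNat_natCast i
  · intro x hx
    rw [Finset.mem_Icc] at hx
    rw [Int.toNat_of_nonneg hx.1]

/-- The chain sum identity: summing the chain products over a box gives a power. -/
lemma chain_sum (k : ℕ) (M : ℕ) :
    ∀ x : ℤ, 0 ≤ x → x ≤ (M : ℤ) →
      ∑ u ∈ Fintype.piFinset (fun _ : Fin k => Finset.Icc (0 : ℤ) (M : ℤ)), chainFrom x u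
        = (k + 1) ^ x.toNat := by
  induction k with
  | zero =>
      intro x _ _
      have h1 : ∀ u : Fin 0 → ℤ, chainFrom x u = 1 := by
        intro u; unfold chainFrom; simp
      rw [Finset.sum_congr rfl fun u _ => h1 u]
      rw [Finset.sum_const, smul_eq_mul, mul_one, Fintype.card_piFinset]
      simp
  | succ k ih =>
      intro x hx hxM
      rw [sum_piFinset_succ]
      have inner : ∀ a ∈ Finset.Icc (0 : ℤ) (M : ℤ),
          (∑ w ∈ Fintype.piFinset (fun _ : Fin k => Finset.Icc (0 : ℤ) (M : ℤ)),
            chainFrom x (Fin.cons a w)) = mbinom x a * (k + 1) ^ a.toNat := by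
        intro a ha
        rw [Finset.mem_Icc] at ha
        have hc : ∀ w : Fin k → ℤ, chainFrom x (Fin.cons a w) = mbinom x a * chainFrom a w := by
          intro w
          rw [chainFrom_succ, Fin.cons_zero, Fin.tail_cons]
        rw [Finset.sum_congr rfl fun w _ => hc w, ← Finset.mul_sum, ih a ha.1 ha.2]
      rw [Finset.sum_congr rfl inner,
        sum_Icc_to_range M (fun z => mbinom x z * (k + 1) ^ z.toNat)]
      obtain ⟨m, rfl⟩ : ∃ m : ℕ, x = (m : ℤ) := ⟨x.toNat, (Int.toNat_of_nonneg hx).symm⟩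
      have hmM : m + 1 ≤ M + 1 := by
        have : (m : ℤ) ≤ (M : ℤ) := hxM
        omega
      have hcast : ∀ i ∈ Finset.range (M + 1),
          mbinom (m : ℤ) (i : ℤ) * (k + 1) ^ ((i : ℤ)).toNat = m.choose i * (k + 1) ^ i := by
        intro i _
        rw [mbinom_natCast, Int.toNat_natCast]
      rw [Finset.sum_congr rfl hcast]
      have hsub : ∑ i ∈ Finset.range (M + 1), m.choose i * (k + 1) ^ i
          = ∑ i ∈ Finset.range (m + 1), m.choose i * (k + 1) ^ i := by
        refine (Finset.sum_subset (Finset.range_subset_range.2 hmM) ?_).symm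
        intro i _ hi
        rw [Finset.mem_range] at hi
        rw [Nat.choose_eq_zero_of_lt (by omega), zero_mul]
      rw [hsub]
      have hbin := add_pow (k + 1) 1 m
      simp only [one_pow, mul_one] at hbin
      rw [Int.toNat_natCast]
      calc ∑ i ∈ Finset.range (m + 1), m.choose i * (k + 1) ^ i
          = ∑ i ∈ Finset.range (m + 1), (k + 1) ^ i * m.choose i := by
            refine Finset.sum_congr rfl fun i _ => mul_comm _ _
        _ = (k + 1 + 1) ^ m := hbin.symm

/-! ### The explicit term -/

/-- The explicit form of our multisum term: `v 0` is the gadget variable `y`,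
`v 1, …, v (s+1)` form a descending chain below `2n`. -/
def myTerm (s n : ℕ) (v : Fin (s + 2) → ℤ) : ℕ :=
  mbinom (v 1 - 1) (v 0) * mbinom (v 0 - v 1 + 1) (v 0 - v 1 + 1) *
      mbinom (2 * (n : ℤ)) ((n : ℤ) + v 1 - v 0) *
    chainFrom (2 * (n : ℤ)) (fun j : Fin (s + 1) => v j.succ)

lemma chain_bound : ∀ {k : ℕ} {m : ℤ}, 0 ≤ m → ∀ u : Fin k → ℤ,
    chainFrom m u ≠ 0 → ∀ j, 0 ≤ u j ∧ u j ≤ m := by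
  intro k
  induction k with
  | zero => intro m _ u _ j; exact j.elim0
  | succ k ih =>
      intro m hm u h j
      rw [chainFrom_succ] at h
      have h1 : mbinom m (u 0) ≠ 0 := fun hz => h (by rw [hz, zero_mul])
      have h2 : chainFrom (u 0) (Fin.tail u) ≠ 0 := fun hz => h (by rw [hz, mul_zero])
      have hu0 : 0 ≤ u 0 ∧ u 0 ≤ m := by
        rcases mbinom_ne_zero h1 with hh | hh <;> omega
      refine Fin.cases ?_ ?_ j
      · exact hu0
      · intro i
        have hi := ih hu0.1 (Fin.tail u) h2 i
        have ht : Fin.tail u i = u i.succ := rfl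
        rw [ht] at hi
        omega

lemma myTerm_supp {s n : ℕ} {v : Fin (s + 2) → ℤ} (h : myTerm s n v ≠ 0) :
    ∀ j, v j ∈ Finset.Icc (0 : ℤ) ((2 * n : ℕ) : ℤ) := by
  unfold myTerm at h
  have f1 : mbinom (v 1 - 1) (v 0) ≠ 0 := fun hz =>
    h (by rw [hz, zero_mul, zero_mul, zero_mul])
  have f4 : chainFrom (2 * (n : ℤ)) (fun j : Fin (s + 1) => v j.succ) ≠ 0 := by
    intro hz
    exact h (by rw [hz, mul_zero])
  have hub := chain_bound (by positivity) _ f4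
  have hv1 : v 1 = v (0 : Fin (s + 1)).succ := by congr 1
  intro j
  refine Fin.cases ?_ ?_ j
  · have h0 := hub 0
    rcases mbinom_ne_zero f1 with h1 | h1 <;>
      · rw [Finset.mem_Icc]
        rw [hv1] at h1
        push_cast
        omega
  · intro i
    have hi := hub i
    rw [Finset.mem_Icc]
    push_cast
    omega

/-- The value of the `y`-gadget sum for fixed `x = u 1`. -/
lemma Ysum (n : ℕ) (x : ℤ) (hx : 0 ≤ x) (hx2 : x ≤ ((2 * n : ℕ) : ℤ)) :
    ∑ y ∈ Finset.Icc (0 : ℤ) ((2 * n : ℕ) : ℤ),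
        mbinom (x - 1) y * mbinom (y - x + 1) (y - x + 1) * mbinom (2 * (n : ℤ)) ((n : ℤ) + x - y)
      = if x = 0 then (2 * n).choose n else (2 * n).choose (n + 1) := by
  have h2n : (2 * (n : ℤ)) = ((2 * n : ℕ) : ℤ) := by push_cast; ring
  rcases eq_or_lt_of_le hx with hx0 | hx1
  · -- x = 0
    rw [if_pos hx0.symm]
    rw [Finset.sum_eq_single 0]
    · rw [← hx0]
      rw [show (0 : ℤ) - 0 + 1 = 1 by ring, show (0:ℤ) - 1 = -1 by ring,
        mbinom_neg_one_zero, mbinom_diag (by norm_num), one_mul, one_mul,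
        show (n : ℤ) + 0 - 0 = ((n : ℕ) : ℤ) by ring, h2n, mbinom_natCast]
    · intro y _ hy
      rw [← hx0, show (0:ℤ) - 1 = -1 by ring, mbinom_neg_one hy, zero_mul, zero_mul]
    · intro habs
      exact absurd (Finset.mem_Icc.mpr ⟨le_refl 0, by positivity⟩) habs
  · -- 1 ≤ x
    rw [if_neg (by omega)]
    rw [Finset.sum_eq_single (x - 1)]
    · rw [mbinom_diag (by omega), show x - 1 - x + 1 = 0 by ring, mbinom_diag (le_refl 0),
        one_mul, one_mul, show (n : ℤ) + x - (x - 1) = ((n + 1 : ℕ) : ℤ) by push_cast; ring,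
        h2n, mbinom_natCast]
    · intro y _ hy
      rcases lt_or_gt_of_ne hy with hlt | hgt
      · rw [mbinom_diag_neg (by omega), mul_zero, zero_mul]
      · rw [mbinom_eq_zero (by omega), zero_mul, zero_mul]
    · intro habs
      exact absurd (Finset.mem_Icc.mpr ⟨by omega, by omega⟩) habs

/-- Evaluation of the full sum of `myTerm` over the bounding box. -/
lemma myTerm_sum (s n : ℕ) :
    ∑ v ∈ Fintype.piFinset (fun _ : Fin (s + 2) => Finset.Icc (0 : ℤ) ((2 * n : ℕ) : ℤ)),
        myTerm s n v
      = (2 * n).choose n + ((s + 2) ^ (2 * n) - 1) * (2 * n).choose (n + 1) := by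
  set M : ℕ := 2 * n with hM
  set I : Finset ℤ := Finset.Icc (0 : ℤ) ((M : ℕ) : ℤ) with hI
  have h2n : (2 * (n : ℤ)) = ((M : ℕ) : ℤ) := by rw [hM]; push_cast; ring
  have hterm : ∀ (y x : ℤ) (w : Fin s → ℤ),
      myTerm s n (Fin.cons y (Fin.cons x w)) =
        (mbinom (x - 1) y * mbinom (y - x + 1) (y - x + 1) *
            mbinom (2 * (n : ℤ)) ((n : ℤ) + x - y) * mbinom (2 * (n : ℤ)) x) *
          chainFrom x w := by
    intro y x w
    unfold myTerm
    have h0 : (Fin.cons y (Fin.cons x w) : Fin (s + 2) → ℤ) 0 = y := rfl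
    have h1 : (Fin.cons y (Fin.cons x w) : Fin (s + 2) → ℤ) 1 = x := by
      rw [← Fin.succ_zero_eq_one, Fin.cons_succ, Fin.cons_zero]
    have hc : (fun j : Fin (s + 1) => (Fin.cons y (Fin.cons x w) : Fin (s + 2) → ℤ) j.succ)
        = Fin.cons x w := by
      funext j
      exact Fin.cons_succ _ _ _
    rw [h0, h1, hc, chainFrom_succ, Fin.cons_zero, Fin.tail_cons]
    ring
  rw [sum_piFinset_succ]
  rw [Finset.sum_congr rfl fun y _ => sum_piFinset_succ I _]
  have step1 : ∀ y ∈ I, ∀ x ∈ I,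
      (∑ w ∈ Fintype.piFinset (fun _ : Fin s => I), myTerm s n (Fin.cons y (Fin.cons x w)))
        = (mbinom (x - 1) y * mbinom (y - x + 1) (y - x + 1) *
            mbinom (2 * (n : ℤ)) ((n : ℤ) + x - y)) *
          (mbinom (2 * (n : ℤ)) x * (s + 1) ^ x.toNat) := by
    intro y _ x hx
    rw [Finset.mem_Icc] at hx
    rw [Finset.sum_congr rfl fun w _ => hterm y x w, ← Finset.mul_sum,
      chain_sum s M x hx.1 hx.2]
    ring
  rw [Finset.sum_congr rfl fun y hy => Finset.sum_congr rfl fun x hx => step1 y hy x hx]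
  rw [Finset.sum_comm]
  have step2 : ∀ x ∈ I,
      (∑ y ∈ I, (mbinom (x - 1) y * mbinom (y - x + 1) (y - x + 1) *
            mbinom (2 * (n : ℤ)) ((n : ℤ) + x - y)) *
          (mbinom (2 * (n : ℤ)) x * (s + 1) ^ x.toNat))
        = (if x = 0 then (2 * n).choose n else (2 * n).choose (n + 1)) *
            (mbinom (2 * (n : ℤ)) x * (s + 1) ^ x.toNat) := by
    intro x hx
    rw [Finset.mem_Icc] at hx
    rw [← Finset.sum_mul, Ysum n x hx.1 hx.2]
  rw [Finset.sum_congr rfl step2]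
  rw [hI, sum_Icc_to_range M (fun z => (if z = 0 then (2 * n).choose n
      else (2 * n).choose (n + 1)) * (mbinom (2 * (n : ℤ)) z * (s + 1) ^ z.toNat))]
  have step3 : ∀ i ∈ Finset.range (M + 1),
      (if (i : ℤ) = 0 then (2 * n).choose n else (2 * n).choose (n + 1)) *
          (mbinom (2 * (n : ℤ)) (i : ℤ) * (s + 1) ^ ((i : ℤ)).toNat)
        = (if i = 0 then (2 * n).choose n else (2 * n).choose (n + 1)) *
            (M.choose i * (s + 1) ^ i) := by
    intro i _
    rw [h2n, mbinom_natCast, Int.toNat_natCast]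
    congr 1
    by_cases hi : i = 0
    · rw [if_pos hi, if_pos (by exact_mod_cast congrArg (Nat.cast : ℕ → ℤ) hi)]
    · rw [if_neg hi, if_neg (by exact_mod_cast hi)]
  rw [Finset.sum_congr rfl step3]
  rw [Finset.sum_range_succ']
  have hbin := add_pow (s + 1) 1 M
  simp only [one_pow, mul_one, Nat.cast_id] at hbin
  rw [Finset.sum_range_succ'] at hbin
  have hE : ∑ i ∈ Finset.range M, M.choose (i + 1) * (s + 1) ^ (i + 1)
      = (s + 2) ^ M - 1 := by
    have h1 : (s + 2) ^ M = (∑ i ∈ Finset.range M, (s + 1) ^ (i + 1) * M.choose (i + 1)) +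
        (s + 1) ^ 0 * M.choose 0 := by
      rw [show s + 2 = s + 1 + 1 by ring, hbin]
    have h2 : ∑ i ∈ Finset.range M, M.choose (i + 1) * (s + 1) ^ (i + 1)
        = ∑ i ∈ Finset.range M, (s + 1) ^ (i + 1) * M.choose (i + 1) :=
      Finset.sum_congr rfl fun i _ => mul_comm _ _
    rw [h2]
    simp only [pow_zero, one_mul, Nat.choose_zero_right, mul_one] at h1
    omega
  have hfirst : (if (0 : ℕ) = 0 then (2 * n).choose n else (2 * n).choose (n + 1)) *
      (M.choose 0 * (s + 1) ^ 0) = (2 * n).choose n := by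
    rw [if_pos rfl, Nat.choose_zero_right, pow_zero, mul_one, mul_one]
  have hrest : ∀ i ∈ Finset.range M,
      (if i + 1 = 0 then (2 * n).choose n else (2 * n).choose (n + 1)) *
          (M.choose (i + 1) * (s + 1) ^ (i + 1))
        = (2 * n).choose (n + 1) * (M.choose (i + 1) * (s + 1) ^ (i + 1)) := by
    intro i _
    rw [if_neg (Nat.succ_ne_zero i)]
  rw [hfirst, Finset.sum_congr rfl hrest, ← Finset.mul_sum, hE, mul_comm, Nat.add_comm]

/-! ### Row vectors and their pairings -/

/-- A row supported on the first two coordinates. -/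
def rowPair (s : ℕ) (c₀ c₁ : ℤ) : Fin (s + 2) → ℤ :=
  Fin.cons c₀ (Fin.cons c₁ (fun _ => 0))

/-- A row supported on a single coordinate. -/
def rowOne (s : ℕ) (k : Fin (s + 2)) : Fin (s + 2) → ℤ :=
  fun j => if j = k then 1 else 0

lemma sum_rowPair (s : ℕ) (c₀ c₁ : ℤ) (v : Fin (s + 2) → ℤ) :
    ∑ j, rowPair s c₀ c₁ j * v j = c₀ * v 0 + c₁ * v 1 := by
  unfold rowPair
  rw [Fin.sum_univ_succ]
  congr 1
  rw [Fin.sum_univ_succ]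
  have hz : ∑ j : Fin s,
      (Fin.cons c₀ (Fin.cons c₁ (fun _ => (0:ℤ))) : Fin (s+2) → ℤ) j.succ.succ * v j.succ.succ
        = 0 := by
    apply Finset.sum_eq_zero
    intro j _
    rw [Fin.cons_succ, Fin.cons_succ]
    exact zero_mul _
  rw [hz, add_zero]
  have h1 : v ((0 : Fin (s+1)).succ) = v 1 := by congr 1
  rw [Fin.cons_succ, Fin.cons_zero, h1]

lemma sum_rowOne (s : ℕ) (k : Fin (s + 2)) (v : Fin (s + 2) → ℤ) :
    ∑ j, rowOne s k j * v j = v k := by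
  unfold rowOne
  rw [Finset.sum_eq_single k]
  · rw [if_pos rfl, one_mul]
  · intro b _ hb
    rw [if_neg hb, zero_mul]
  · intro h
    exact absurd (Finset.mem_univ k) h

lemma mbinom_congr {a b c d : ℤ} (h1 : a = c) (h2 : b = d) : mbinom a b = mbinom c d := by
  rw [h1, h2]

/-! ### The matrices of the multisum -/

def Amat (s : ℕ) : Fin (3 + (s + 1)) → Fin (s + 2) → ℤ := fun i =>
  if i.val = 0 then rowPair s 0 1
  else if i.val = 1 then rowPair s 1 (-1)
  else if i.val ≤ 3 then rowPair s 0 0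
  else rowOne s ⟨i.val - 3, by have := i.isLt; omega⟩

def Bmat (s : ℕ) : Fin (3 + (s + 1)) → Fin (s + 2) → ℤ := fun i =>
  if i.val = 0 then rowPair s 1 0
  else if i.val = 1 then rowPair s 1 (-1)
  else if i.val = 2 then rowPair s (-1) 1
  else rowOne s ⟨i.val - 2, by have := i.isLt; omega⟩

def avec1 (s : ℕ) : Fin (3 + (s + 1)) → ℤ := fun i =>
  if i.val = 2 ∨ i.val = 3 then 2 else 0

def avec2 (s : ℕ) : Fin (3 + (s + 1)) → ℤ := fun i =>
  if i.val = 0 then -1 else if i.val = 1 then 1 else 0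

def bvec1 (s : ℕ) : Fin (3 + (s + 1)) → ℤ := fun i =>
  if i.val = 2 then 1 else 0

def bvec2 (s : ℕ) : Fin (3 + (s + 1)) → ℤ := fun i =>
  if i.val = 1 then 1 else 0

lemma term_eq (s n : ℕ) (v : Fin (s + 2) → ℤ) :
    multisumTerm (Amat s) (Bmat s) (avec1 s) (avec2 s) (bvec1 s) (bvec2 s) n v
      = myTerm s n v := by
  unfold multisumTerm myTerm
  rw [Fin.prod_univ_add]
  congr 1
  · rw [Fin.prod_univ_three]
    congr 1
    · congr 1
      · -- factor 0 : mbinom (v 1 - 1) (v 0)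
        refine mbinom_congr ?_ ?_
        · rw [show Amat s (Fin.castAdd (s + 1) 0) = rowPair s 0 1 from rfl,
            show avec1 s (Fin.castAdd (s + 1) 0) = 0 from rfl,
            show avec2 s (Fin.castAdd (s + 1) 0) = -1 from rfl, sum_rowPair]
          ring
        · rw [show Bmat s (Fin.castAdd (s + 1) 0) = rowPair s 1 0 from rfl,
            show bvec1 s (Fin.castAdd (s + 1) 0) = 0 from rfl,
            show bvec2 s (Fin.castAdd (s + 1) 0) = 0 from rfl, sum_rowPair]
          ring
      · -- factor 1 : mbinom (v 0 - v 1 + 1) (v 0 - v 1 + 1)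
        refine mbinom_congr ?_ ?_
        · rw [show Amat s (Fin.castAdd (s + 1) 1) = rowPair s 1 (-1) from rfl,
            show avec1 s (Fin.castAdd (s + 1) 1) = 0 from rfl,
            show avec2 s (Fin.castAdd (s + 1) 1) = 1 from rfl, sum_rowPair]
          ring
        · rw [show Bmat s (Fin.castAdd (s + 1) 1) = rowPair s 1 (-1) from rfl,
            show bvec1 s (Fin.castAdd (s + 1) 1) = 0 from rfl,
            show bvec2 s (Fin.castAdd (s + 1) 1) = 1 from rfl, sum_rowPair]
          ring
    · -- factor 2 : mbinom (2n) (n + v 1 - v 0)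
      refine mbinom_congr ?_ ?_
      · rw [show Amat s (Fin.castAdd (s + 1) 2) = rowPair s 0 0 from rfl,
          show avec1 s (Fin.castAdd (s + 1) 2) = 2 from rfl,
          show avec2 s (Fin.castAdd (s + 1) 2) = 0 from rfl, sum_rowPair]
        ring
      · rw [show Bmat s (Fin.castAdd (s + 1) 2) = rowPair s (-1) 1 from rfl,
          show bvec1 s (Fin.castAdd (s + 1) 2) = 1 from rfl,
          show bvec2 s (Fin.castAdd (s + 1) 2) = 0 from rfl, sum_rowPair]
        ring
  · -- the chain factors
    unfold chainFrom
    apply Finset.prod_congr rfl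
    intro j _
    rcases j with ⟨jv, hj⟩
    cases jv with
    | zero =>
        refine mbinom_congr ?_ ?_
        · rw [show Amat s (Fin.natAdd 3 ⟨0, hj⟩) = rowPair s 0 0 from rfl,
            show avec1 s (Fin.natAdd 3 ⟨0, hj⟩) = 2 from rfl,
            show avec2 s (Fin.natAdd 3 ⟨0, hj⟩) = 0 from rfl, sum_rowPair]
          rw [show ((Fin.cons (2 * (n:ℤ)) (fun j : Fin (s+1) => v j.succ) : Fin (s+2) → ℤ))
              (Fin.castSucc ⟨0, hj⟩) = 2 * (n:ℤ) from rfl]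
          ring
        · rw [show Bmat s (Fin.natAdd 3 ⟨0, hj⟩) = rowOne s ⟨1, by omega⟩ from rfl,
            show bvec1 s (Fin.natAdd 3 ⟨0, hj⟩) = 0 from rfl,
            show bvec2 s (Fin.natAdd 3 ⟨0, hj⟩) = 0 from rfl, sum_rowOne]
          rw [show (fun j : Fin (s+1) => v j.succ) ⟨0, hj⟩ = v ⟨1, by omega⟩ from rfl]
          ring
    | succ i =>
        have hA : Amat s (Fin.natAdd 3 ⟨i + 1, hj⟩) = rowOne s ⟨i + 1, by omega⟩ := by
          unfold Amat
          rw [if_neg (by dsimp only [Fin.natAdd]; omega),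
            if_neg (by dsimp only [Fin.natAdd]; omega),
            if_neg (by dsimp only [Fin.natAdd]; omega)]
          apply congrArg
          apply Fin.ext
          dsimp only [Fin.natAdd]
          omega
        have hB : Bmat s (Fin.natAdd 3 ⟨i + 1, hj⟩) = rowOne s ⟨i + 2, by omega⟩ := by
          unfold Bmat
          rw [if_neg (by dsimp only [Fin.natAdd]; omega),
            if_neg (by dsimp only [Fin.natAdd]; omega),
            if_neg (by dsimp only [Fin.natAdd]; omega)]
          apply congrArg
          apply Fin.ext
          dsimp only [Fin.natAdd]
          omega
        have ha1 : avec1 s (Fin.natAdd 3 ⟨i + 1, hj⟩) = 0 := by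
          unfold avec1
          rw [if_neg (by dsimp only [Fin.natAdd]; omega)]
        have ha2 : avec2 s (Fin.natAdd 3 ⟨i + 1, hj⟩) = 0 := by
          unfold avec2
          rw [if_neg (by dsimp only [Fin.natAdd]; omega),
            if_neg (by dsimp only [Fin.natAdd]; omega)]
        have hb1 : bvec1 s (Fin.natAdd 3 ⟨i + 1, hj⟩) = 0 := by
          unfold bvec1
          rw [if_neg (by dsimp only [Fin.natAdd]; omega)]
        have hb2 : bvec2 s (Fin.natAdd 3 ⟨i + 1, hj⟩) = 0 := by
          unfold bvec2
          rw [if_neg (by dsimp only [Fin.natAdd]; omega)]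
        refine mbinom_congr ?_ ?_
        · rw [hA, ha1, ha2, sum_rowOne]
          rw [show ((Fin.cons (2 * (n:ℤ)) (fun j : Fin (s+1) => v j.succ) : Fin (s+2) → ℤ))
              (Fin.castSucc ⟨i + 1, hj⟩) = v ⟨i + 1, by omega⟩ from rfl]
          ring
        · rw [hB, hb1, hb2, sum_rowOne]
          rw [show (fun j : Fin (s+1) => v j.succ) ⟨i + 1, hj⟩ = v ⟨i + 2, by omega⟩ from rfl]
          ring

/-! ### Part 1: the multisum property -/

lemma part1 (p : ℕ) (hp : p.Prime) :
    IsBinomialMultisum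
      (fun n => Nat.choose (2 * n) n + (p ^ (2 * n) - 1) * Nat.choose (2 * n) (n + 1)) := by
  obtain ⟨s, rfl⟩ : ∃ s, p = s + 2 := ⟨p - 2, by have := hp.two_le; omega⟩
  refine ⟨3 + (s + 1), s + 2, Amat s, Bmat s, avec1 s, avec2 s, bvec1 s, bvec2 s, ?_, ?_⟩
  · intro n
    apply Set.Finite.subset
      (Finset.finite_toSet (Fintype.piFinset fun _ : Fin (s + 2) =>
        Finset.Icc (0 : ℤ) ((2 * n : ℕ) : ℤ)))
    intro v hv
    rw [Function.mem_support, term_eq] at hv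
    rw [Finset.mem_coe, Fintype.mem_piFinset]
    exact myTerm_supp hv
  · intro n
    have hsub : Function.support
        (multisumTerm (Amat s) (Bmat s) (avec1 s) (avec2 s) (bvec1 s) (bvec2 s) n) ⊆
        ↑(Fintype.piFinset fun _ : Fin (s + 2) => Finset.Icc (0 : ℤ) ((2 * n : ℕ) : ℤ)) := by
      intro v hv
      rw [Function.mem_support, term_eq] at hv
      rw [Finset.mem_coe, Fintype.mem_piFinset]
      exact myTerm_supp hv
    rw [finsum_eq_sum_of_support_subset _ hsub,
      Finset.sum_congr rfl fun v _ => term_eq s n v, myTerm_sum s n]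

/-! ### Part 2: the `p`-adic valuation -/

lemma part2 (p : ℕ) (hp : p.Prime) (n : ℕ) :
    padicValNat p
        (Nat.choose (2 * n) n + (p ^ (2 * n) - 1) * Nat.choose (2 * n) (n + 1)) =
      padicValNat p (catalan n) := by
  have hfact : Fact p.Prime := ⟨hp⟩
  set C : ℕ := Nat.choose (2 * n) (n + 1) with hC
  have hcat0 : 0 < catalan n := by
    rcases Nat.eq_zero_or_pos (catalan n) with h0 | h0
    · exfalso
      have h1 := succ_mul_catalan_eq_centralBinom n
      rw [h0, Nat.mul_zero] at h1
      exact (Nat.centralBinom_pos n).ne' h1.symm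
    · exact h0
  have hkey : Nat.choose (2 * n) n + (p ^ (2 * n) - 1) * C = catalan n + p ^ (2 * n) * C := by
    have h1 : (n + 1) * catalan n = Nat.centralBinom n := succ_mul_catalan_eq_centralBinom n
    have h2 : Nat.choose (2 * n) (n + 1) * (n + 1) = Nat.choose (2 * n) n * n := by
      have h3 := Nat.choose_succ_right_eq (2 * n) n
      rwa [show 2 * n - n = n by omega] at h3
    have h3 : catalan n + C = Nat.choose (2 * n) n := by
      have h4 : (n + 1) * (catalan n + C) = (n + 1) * Nat.choose (2 * n) n := by
        rw [Nat.mul_add, h1]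
        have h5 : Nat.centralBinom n = Nat.choose (2 * n) n := rfl
        rw [h5, hC, Nat.mul_comm (n + 1), h2]
        ring
      exact Nat.eq_of_mul_eq_mul_left n.succ_pos h4
    have hp1 : 1 ≤ p ^ (2 * n) := Nat.one_le_pow _ _ hp.pos
    have hCle : C ≤ p ^ (2 * n) * C := Nat.le_mul_of_pos_left C (by omega)
    rw [Nat.sub_mul, one_mul, ← h3]
    omega
  rw [hkey]
  rcases Nat.eq_zero_or_pos n with hn | hn
  · subst hn
    have hC0 : C = 0 := by rw [hC]; exact Nat.choose_eq_zero_of_lt (by norm_num)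
    rw [hC0, Nat.mul_zero, Nat.add_zero]
  · have hlt : catalan n < p ^ (2 * n) := by
      have h1 : 2 * catalan n ≤ (n + 1) * catalan n := Nat.mul_le_mul_right _ (by omega)
      have h2 : (n + 1) * catalan n = Nat.centralBinom n := succ_mul_catalan_eq_centralBinom n
      have h3 : Nat.centralBinom n ≤ 2 ^ (2 * n) := by
        have h4 : Nat.centralBinom n = Nat.choose (2 * n) n := rfl
        have h5 : Nat.choose (2 * n) n ≤ ∑ k ∈ Finset.range (2 * n + 1), Nat.choose (2 * n) k :=
          Finset.single_le_sum (f := fun k => Nat.choose (2 * n) k) (fun _ _ => Nat.zero_le _)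
            (Finset.mem_range.mpr (by omega))
        rw [Nat.sum_range_choose] at h5
        rw [h4]
        exact h5
      have h4 : 2 ^ (2 * n) ≤ p ^ (2 * n) := Nat.pow_le_pow_left hp.two_le _
      omega
    set w : ℕ := padicValNat p (catalan n) with hw
    have hwlt : w < 2 * n := by
      have hdvd : p ^ w ∣ catalan n := pow_padicValNat_dvd
      have hle : p ^ w ≤ catalan n := Nat.le_of_dvd hcat0 hdvd
      have : p ^ w < p ^ (2 * n) := lt_of_le_of_lt hle hlt
      exact (Nat.pow_lt_pow_iff_right hp.one_lt).mp this
    have hN0 : catalan n + p ^ (2 * n) * C ≠ 0 := by omega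
    have hdvd1 : p ^ w ∣ catalan n + p ^ (2 * n) * C :=
      dvd_add pow_padicValNat_dvd ((pow_dvd_pow p (by omega)).mul_right C)
    have hnd : ¬ p ^ (w + 1) ∣ catalan n + p ^ (2 * n) * C := by
      intro hd
      have h2 : p ^ (w + 1) ∣ p ^ (2 * n) * C := (pow_dvd_pow p (by omega)).mul_right C
      have h3 := Nat.dvd_sub hd h2
      rw [Nat.add_sub_cancel] at h3
      rcases (padicValNat_dvd_iff (w + 1) (catalan n)).mp h3 with h4 | h4
      · omega
      · rw [← hw] at h4
        omega
    have hge : w ≤ padicValNat p (catalan n + p ^ (2 * n) * C) := by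
      rcases (padicValNat_dvd_iff w (catalan n + p ^ (2 * n) * C)).mp hdvd1 with h4 | h4
      · exact absurd h4 hN0
      · exact h4
    have hle2 : padicValNat p (catalan n + p ^ (2 * n) * C) < w + 1 := by
      by_contra hcon
      push_neg at hcon
      exact hnd ((padicValNat_dvd_iff (w + 1) _).mpr (Or.inr hcon))
    omega

end TCaux

/-- For every prime `p`, the function `f(n) = C(2n,n) + (p^{2n}-1)·C(2n,n+1)` is a
binomial multisum (= tile counting function) whose `p`-adic valuation agrees with that
of the Catalan numbers. -/
theorem tileCounting_catalan_padic (p : ℕ) (hp : p.Prime) :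
    IsBinomialMultisum
      (fun n => Nat.choose (2 * n) n + (p ^ (2 * n) - 1) * Nat.choose (2 * n) (n + 1)) ∧
    ∀ n : ℕ,
      padicValNat p
        (Nat.choose (2 * n) n + (p ^ (2 * n) - 1) * Nat.choose (2 * n) (n + 1)) =
      padicValNat p (catalan n) :=
  ⟨TCaux.part1 p hp, fun n => TCaux.part2 p hp n⟩
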